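/- For all nonnegative integers m, n, k, i, j with k ≤ min(m,n), 0 ≤ i ≤ m, 0 ≤ j ≤ n, and k ≤ i+j ≤ m+n-k, the two sums Σ_{l=0}^{k} (-1)^l · C(i+j-k, i-l) · C(m-l, k-l) · C(n-k+l, l) and Σ_{l=0}^{k} (-1)^l · C(i+j-k, i-l) · C(m-i, k-l) · C(n-j, l) are equal. -/

import Mathlib

open Finset

theorem sum_if_Icc (f : ℕ → ℤ) (a b N : ℕ) (hb : b ≤ N) :
    ∑ l ∈ range (N+1), (if a ≤ l ∧ l ≤ b then f l else 0)
      = ∑ r ∈ range (b + 1 - a), f (a + r) := by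
  rw [← Finset.sum_filter]
  have hfil : Finset.filter (fun l => a ≤ l ∧ l ≤ b) (range (N+1)) = Finset.Ico a (b+1) := by
    ext x
    simp only [mem_filter, mem_range, mem_Ico, Nat.lt_succ_iff]
    omega
  rw [hfil, Finset.sum_Ico_eq_sum_range]

theorem keyF (c q : ℕ) :
    (∑ r ∈ range (q+1), (-1:ℤ)^r * ((c+q).choose (q-r)) * ((c+r).choose r))
      = if q = 0 then 1 else 0 := by
  rw [← Finset.sum_range_reflect]
  simp only [Nat.add_sub_cancel]
  have h1 : ∀ r ∈ range (q+1),
      (-1:ℤ)^(q - r) * ((c+q).choose (q-(q-r))) * ((c+(q-r)).choose (q-r))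
        = ((c+q).choose q : ℤ) * ((-1:ℤ)^q * ((-1:ℤ)^r * (q.choose r))) := by
    intro r hr
    simp only [mem_range, Nat.lt_succ_iff] at hr
    have e1 : q - (q - r) = r := by omega
    have e2 : (-1:ℤ)^(q-r) = (-1:ℤ)^q * (-1:ℤ)^r := by
      have h : (-1:ℤ)^q = (-1)^(q-r) * (-1)^r := by
        rw [← pow_add]; congr 1; omega
      rw [h, mul_assoc, ← mul_pow]; norm_num
    have key : (c+q).choose r * ((c+q) - r).choose (q - r) = (c+q).choose q * q.choose r := by
      rcases le_or_gt q (c+q) with h | h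
      · rw [Nat.choose_mul (n := c+q) (k := q) (s := r) (by omega)]
      · omega
    have keyZ : ((c+q).choose r : ℤ) * (((c+q) - r).choose (q - r) : ℤ)
        = ((c+q).choose q : ℤ) * (q.choose r : ℤ) := by exact_mod_cast key
    have e3 : c + (q - r) = (c + q) - r := by omega
    rw [e1, e2, e3]
    linear_combination ((-1:ℤ)^q * (-1:ℤ)^r) * keyZ
  rw [Finset.sum_congr rfl h1, ← Finset.mul_sum, ← Finset.mul_sum,
    Int.alternating_sum_range_choose]
  rcases eq_or_ne q 0 with rfl | hq
  · simp
  · simp [hq]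

theorem key2 (k j p t : ℕ) (hp : p ≤ k) :
    ∑ l ∈ range (k+1), (if k ≤ j + l ∧ t ≤ l ∧ l ≤ p then
        (-1:ℤ)^l * ((j+p-k).choose (p-l)) * ((j+l-k).choose (l-t)) else 0)
      = if p = t ∧ k ≤ j + p then (-1:ℤ)^p else 0 := by
  rcases le_or_gt k (j + t) with hkt | hkt
  · -- guard simplifies to t ≤ l ≤ p
    have hcong : ∀ l ∈ range (k+1),
        (if k ≤ j + l ∧ t ≤ l ∧ l ≤ p then
          (-1:ℤ)^l * ((j+p-k).choose (p-l)) * ((j+l-k).choose (l-t)) else 0)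
        = (if t ≤ l ∧ l ≤ p then
          (-1:ℤ)^l * ((j+p-k).choose (p-l)) * ((j+l-k).choose (l-t)) else 0) := by
      intro l _
      congr 1
      simp only [eq_iff_iff]
      omega
    rw [Finset.sum_congr rfl hcong, sum_if_Icc _ t p k hp]
    rcases le_or_gt t p with htp | htp
    · have hq : p + 1 - t = (p - t) + 1 := by omega
      rw [hq]
      have hcong2 : ∀ r ∈ range ((p - t) + 1),
          (-1:ℤ)^(t+r) * ((j+p-k).choose (p-(t+r))) * ((j+(t+r)-k).choose ((t+r)-t))
          = (-1:ℤ)^t * ((-1:ℤ)^r * (((j+t-k)+(p-t)).choose ((p-t)-r)) * (((j+t-k)+r).choose r)) := by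
        intro r hr
        simp only [mem_range, Nat.lt_succ_iff] at hr
        have e1 : j + p - k = (j+t-k) + (p-t) := by omega
        have e2 : p - (t+r) = (p-t) - r := by omega
        have e3 : j + (t+r) - k = (j+t-k) + r := by omega
        have e4 : (t+r) - t = r := by omega
        rw [e1, e2, e3, e4, pow_add]
        ring
      rw [Finset.sum_congr rfl hcong2, ← Finset.mul_sum, keyF]
      rcases eq_or_ne p t with rfl | hpt
      · simp [hkt]
      · have h1 : ¬ (p - t = 0) := by omega
        have h2 : ¬ (p = t ∧ k ≤ j + p) := by tauto
        simp [h1, h2]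
    · have h1 : p + 1 - t = 0 := by omega
      have h2 : ¬ (p = t ∧ k ≤ j + p) := by omega
      simp [h1, h2]
  · -- all terms vanish
    have hcong : ∀ l ∈ range (k+1),
        (if k ≤ j + l ∧ t ≤ l ∧ l ≤ p then
          (-1:ℤ)^l * ((j+p-k).choose (p-l)) * ((j+l-k).choose (l-t)) else 0) = 0 := by
      intro l _
      split_ifs with h
      · have : (j+l-k).choose (l-t) = 0 := Nat.choose_eq_zero_of_lt (by omega)
        rw [this]
        push_cast
        ring
      · rfl
    rw [Finset.sum_congr rfl hcong]
    have h2 : ¬ (p = t ∧ k ≤ j + p) := by omega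
    simp [h2]

theorem vdm (a b K : ℕ) :
    ((a + b).choose K : ℤ) = ∑ s ∈ range (K+1), (a.choose s * b.choose (K - s) : ℤ) := by
  rw [Nat.add_choose_eq, Finset.Nat.sum_antidiagonal_eq_sum_range_succ_mk]
  push_cast
  rfl

theorem L1 (m k i l : ℕ) (hlk : l ≤ k) (hli : l ≤ i) (him : i ≤ m) :
    ((m-l).choose (k-l) : ℤ)
      = ∑ p ∈ range (k+1), (if l ≤ p then ((m-i).choose (k-p) * (i-l).choose (p-l) : ℤ) else 0) := by
  have e : m - l = (i - l) + (m - i) := by omega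
  rw [e, vdm]
  have hcong : ∀ p ∈ range (k+1),
      (if l ≤ p then ((m-i).choose (k-p) * (i-l).choose (p-l) : ℤ) else 0)
      = (if l ≤ p ∧ p ≤ k then ((i-l).choose (p-l) * (m-i).choose (k-p) : ℤ) else 0) := by
    intro p hp
    simp only [mem_range, Nat.lt_succ_iff] at hp
    by_cases h : l ≤ p
    · rw [if_pos h, if_pos ⟨h, hp⟩]; ring
    · rw [if_neg h, if_neg (by tauto)]
  rw [Finset.sum_congr rfl hcong, sum_if_Icc _ l k k le_rfl]
  have hq : k + 1 - l = (k - l) + 1 := by omega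
  rw [hq]
  apply Finset.sum_congr rfl
  intro r hr
  have e1 : l + r - l = r := by omega
  have e2 : k - (l + r) = (k - l) - r := by omega
  rw [e1, e2]

theorem L2 (n k j l : ℕ) (hlk : l ≤ k) (hkjl : k ≤ j + l) (hjn : j ≤ n) (hkn : k ≤ n) :
    ((n-k+l).choose l : ℤ)
      = ∑ t ∈ range (k+1), (if t ≤ l then ((n-j).choose t * (j+l-k).choose (l-t) : ℤ) else 0) := by
  have e : n - k + l = (n - j) + (j + l - k) := by omega
  rw [e, vdm]
  have hcong : ∀ t ∈ range (k+1),
      (if t ≤ l then ((n-j).choose t * (j+l-k).choose (l-t) : ℤ) else 0)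
      = (if 0 ≤ t ∧ t ≤ l then ((n-j).choose t * (j+l-k).choose (l-t) : ℤ) else 0) := by
    intro t _
    by_cases h : t ≤ l
    · rw [if_pos h, if_pos ⟨Nat.zero_le t, h⟩]
    · rw [if_neg h, if_neg (by tauto)]
  rw [Finset.sum_congr rfl hcong, sum_if_Icc _ 0 l k hlk]
  simp

theorem core (m n k i j : ℕ) (hkm : k ≤ m) (hkn : k ≤ n) (him : i ≤ m) (hjn : j ≤ n)
    (hk : k ≤ i + j) :
    ∑ l ∈ range (k+1), (if l ≤ i ∧ k ≤ j + l then
        (-1:ℤ)^l * ((i+j-k).choose (i-l)) * ((m-l).choose (k-l)) * ((n-k+l).choose l) else 0)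
    = ∑ l ∈ range (k+1), (if l ≤ i ∧ k ≤ j + l then
        (-1:ℤ)^l * ((i+j-k).choose (i-l)) * ((m-i).choose (k-l)) * ((n-j).choose l) else 0) := by
  have stepA : ∑ l ∈ range (k+1), (if l ≤ i ∧ k ≤ j + l then
        (-1:ℤ)^l * ((i+j-k).choose (i-l)) * ((m-l).choose (k-l)) * ((n-k+l).choose l) else 0)
      = ∑ l ∈ range (k+1), ∑ p ∈ range (k+1), ∑ t ∈ range (k+1),
          (if l ≤ i ∧ k ≤ j + l ∧ l ≤ p ∧ t ≤ l then
            (-1:ℤ)^l * ((i+j-k).choose (i-l))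
              * (((m-i).choose (k-p)) * ((i-l).choose (p-l)))
              * (((n-j).choose t) * ((j+l-k).choose (l-t))) else 0) := by
    apply Finset.sum_congr rfl
    intro l hl
    simp only [mem_range, Nat.lt_succ_iff] at hl
    by_cases hg : l ≤ i ∧ k ≤ j + l
    · obtain ⟨hli, hkjl⟩ := hg
      rw [if_pos ⟨hli, hkjl⟩, L1 m k i l hl hli him, L2 n k j l hl hkjl hjn hkn,
        Finset.mul_sum, Finset.sum_comm (s := range (k+1)) (t := range (k+1))]
      apply Finset.sum_congr rfl
      intro t ht
      rw [Finset.mul_sum, Finset.sum_mul]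
      apply Finset.sum_congr rfl
      intro p hp
      split_ifs <;> first | ring1 | (exfalso; omega)
    · rw [if_neg hg]
      symm
      apply Finset.sum_eq_zero
      intro p _
      apply Finset.sum_eq_zero
      intro t _
      rw [if_neg (by omega)]
  rw [stepA, Finset.sum_comm]
  have stepB : ∀ p ∈ range (k+1), ∑ l ∈ range (k+1), ∑ t ∈ range (k+1),
          (if l ≤ i ∧ k ≤ j + l ∧ l ≤ p ∧ t ≤ l then
            (-1:ℤ)^l * ((i+j-k).choose (i-l))
              * (((m-i).choose (k-p)) * ((i-l).choose (p-l)))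
              * (((n-j).choose t) * ((j+l-k).choose (l-t))) else 0)
      = ∑ t ∈ range (k+1), ∑ l ∈ range (k+1),
          (if l ≤ i ∧ k ≤ j + l ∧ l ≤ p ∧ t ≤ l then
            (-1:ℤ)^l * ((i+j-k).choose (i-l))
              * (((m-i).choose (k-p)) * ((i-l).choose (p-l)))
              * (((n-j).choose t) * ((j+l-k).choose (l-t))) else 0) := by
    intro p _
    exact Finset.sum_comm
  rw [Finset.sum_congr rfl stepB]
  have stepC : ∀ p ∈ range (k+1), ∀ t ∈ range (k+1),
      ∑ l ∈ range (k+1),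
          (if l ≤ i ∧ k ≤ j + l ∧ l ≤ p ∧ t ≤ l then
            (-1:ℤ)^l * ((i+j-k).choose (i-l))
              * (((m-i).choose (k-p)) * ((i-l).choose (p-l)))
              * (((n-j).choose t) * ((j+l-k).choose (l-t))) else 0)
      = (if p = t ∧ p ≤ i ∧ k ≤ j + p then
          (-1:ℤ)^p * ((i+j-k).choose (i-p)) * ((m-i).choose (k-p)) * ((n-j).choose p) else 0) := by
    intro p hp t ht
    simp only [mem_range, Nat.lt_succ_iff] at hp ht
    by_cases hpi : p ≤ i
    · have hE : ∀ l ∈ range (k+1),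
          (if l ≤ i ∧ k ≤ j + l ∧ l ≤ p ∧ t ≤ l then
            (-1:ℤ)^l * ((i+j-k).choose (i-l))
              * (((m-i).choose (k-p)) * ((i-l).choose (p-l)))
              * (((n-j).choose t) * ((j+l-k).choose (l-t))) else 0)
          = (((i+j-k).choose (i-p) : ℤ) * ((m-i).choose (k-p)) * ((n-j).choose t))
            * (if k ≤ j + l ∧ t ≤ l ∧ l ≤ p then
                (-1:ℤ)^l * ((j+p-k).choose (p-l)) * ((j+l-k).choose (l-t)) else 0) := by
        intro l _
        split_ifs with h1 h2
        · obtain ⟨hli, hkjl, hlp, htl⟩ := h1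
          have hrev : (i+j-k).choose (i-l) * (i-l).choose (p-l)
              = (i+j-k).choose (i-p) * ((j+p-k).choose (p-l)) := by
            have hsym : (i-l).choose (p-l) = (i-l).choose (i-p) := by
              have e : i - p = (i - l) - (p - l) := by omega
              rw [e, Nat.choose_symm (by omega)]
            rw [hsym, Nat.choose_mul (show i - p ≤ i - l by omega)]
            congr 2 <;> omega
          have hrevZ : ((i+j-k).choose (i-l) : ℤ) * ((i-l).choose (p-l))
              = ((i+j-k).choose (i-p) : ℤ) * ((j+p-k).choose (p-l)) := by exact_mod_cast hrev
          linear_combination ((-1:ℤ)^l * ((m-i).choose (k-p)) * ((n-j).choose t)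
            * ((j+l-k).choose (l-t))) * hrevZ
        · omega
        · omega
        · ring
      rw [Finset.sum_congr rfl hE, ← Finset.mul_sum, key2 k j p t hp]
      split_ifs with h1 h2
      · obtain ⟨rfl, -⟩ := h1
        ring
      · omega
      · omega
      · ring
    · rw [if_neg (by omega)]
      apply Finset.sum_eq_zero
      intro l _
      split_ifs with h
      · have hz : (i-l).choose (p-l) = 0 := Nat.choose_eq_zero_of_lt (by omega)
        rw [hz]
        push_cast
        ring
      · rfl
  rw [Finset.sum_congr rfl (fun p hp => Finset.sum_congr rfl (stepC p hp))]
  apply Finset.sum_congr rfl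
  intro p hp
  simp only [mem_range, Nat.lt_succ_iff] at hp
  rw [Finset.sum_eq_single p]
  · split_ifs with h1 h2
    · ring
    · omega
    · omega
    · rfl
  · intro t _ htp
    rw [if_neg (by omega)]
  · intro hnot
    exact absurd (mem_range.mpr (by omega)) hnot

/-- Integer binomial coefficient: `C(a,b) = 0` when `b < 0` or `b > a`. -/
def ch (a b : ℤ) : ℤ := if 0 ≤ b ∧ b ≤ a then ((a.toNat).choose b.toNat : ℤ) else 0

theorem ch_natCast (a b : ℕ) : ch (a : ℤ) (b : ℤ) = (a.choose b : ℤ) := by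
  unfold ch
  split_ifs with h
  · simp
  · have hab : a < b := by omega
    rw [Nat.choose_eq_zero_of_lt hab]
    simp

/-- Clebsch-Gordan sum `c_{m,n,k}(i,j)`. -/
def cg (m n k i j : ℕ) : ℤ :=
  ∑ l ∈ Finset.range (k+1),
    (-1:ℤ)^l * ch ((i:ℤ)+(j:ℤ)-(k:ℤ)) ((i:ℤ)-(l:ℤ))
      * ch ((m:ℤ)-(l:ℤ)) ((k:ℤ)-(l:ℤ)) * ch ((n:ℤ)-(k:ℤ)+(l:ℤ)) (l:ℤ)

/-- Trinomial coefficient `(a+b+c)! / (a! b! c!)`. -/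
def mult (a b c : ℕ) : ℕ := (a+b+c).factorial / (a.factorial * b.factorial * c.factorial)

theorem stmt_0 (m n k i j : ℕ) (hkm : k ≤ m) (hkn : k ≤ n) (him : i ≤ m) (hjn : j ≤ n)
    (hk : k ≤ i + j) (hub : i + j ≤ m + n - k) :
    cg m n k i j =
      ∑ l ∈ Finset.range (k+1),
        (-1:ℤ)^l * ch ((i:ℤ)+(j:ℤ)-(k:ℤ)) ((i:ℤ)-(l:ℤ))
          * ch ((m:ℤ)-(i:ℤ)) ((k:ℤ)-(l:ℤ)) * ch ((n:ℤ)-(j:ℤ)) (l:ℤ) := by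
  have hch0 : ∀ l : ℕ, ¬ (l ≤ i ∧ k ≤ j + l) →
      ch ((i:ℤ)+(j:ℤ)-(k:ℤ)) ((i:ℤ)-(l:ℤ)) = 0 := by
    intro l h
    unfold ch
    rw [if_neg (by omega)]
  have conv1 : cg m n k i j = ∑ l ∈ range (k+1), (if l ≤ i ∧ k ≤ j + l then
        (-1:ℤ)^l * ((i+j-k).choose (i-l)) * ((m-l).choose (k-l)) * ((n-k+l).choose l) else 0) := by
    unfold cg
    apply Finset.sum_congr rfl
    intro l hl
    simp only [mem_range, Nat.lt_succ_iff] at hl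
    by_cases h : l ≤ i ∧ k ≤ j + l
    · have e1 : (i:ℤ)+(j:ℤ)-(k:ℤ) = ((i+j-k : ℕ) : ℤ) := by push_cast; omega
      have e2 : (i:ℤ)-(l:ℤ) = ((i-l : ℕ) : ℤ) := by push_cast; omega
      have e3 : (m:ℤ)-(l:ℤ) = ((m-l : ℕ) : ℤ) := by push_cast; omega
      have e4 : (k:ℤ)-(l:ℤ) = ((k-l : ℕ) : ℤ) := by push_cast; omega
      have e5 : (n:ℤ)-(k:ℤ)+(l:ℤ) = ((n-k+l : ℕ) : ℤ) := by push_cast; omega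
      rw [e1, e2, e3, e4, e5, ch_natCast, ch_natCast, ch_natCast, if_pos h]
    · rw [hch0 l h, if_neg h]
      ring
  have conv2 : ∑ l ∈ Finset.range (k+1),
        (-1:ℤ)^l * ch ((i:ℤ)+(j:ℤ)-(k:ℤ)) ((i:ℤ)-(l:ℤ))
          * ch ((m:ℤ)-(i:ℤ)) ((k:ℤ)-(l:ℤ)) * ch ((n:ℤ)-(j:ℤ)) (l:ℤ)
      = ∑ l ∈ range (k+1), (if l ≤ i ∧ k ≤ j + l then
        (-1:ℤ)^l * ((i+j-k).choose (i-l)) * ((m-i).choose (k-l)) * ((n-j).choose l) else 0) := by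
    apply Finset.sum_congr rfl
    intro l hl
    simp only [mem_range, Nat.lt_succ_iff] at hl
    by_cases h : l ≤ i ∧ k ≤ j + l
    · have e1 : (i:ℤ)+(j:ℤ)-(k:ℤ) = ((i+j-k : ℕ) : ℤ) := by push_cast; omega
      have e2 : (i:ℤ)-(l:ℤ) = ((i-l : ℕ) : ℤ) := by push_cast; omega
      have e3 : (m:ℤ)-(i:ℤ) = ((m-i : ℕ) : ℤ) := by push_cast; omega
      have e4 : (k:ℤ)-(l:ℤ) = ((k-l : ℕ) : ℤ) := by push_cast; omega
      have e5 : (n:ℤ)-(j:ℤ) = ((n-j : ℕ) : ℤ) := by push_cast; omega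
      rw [e1, e2, e3, e4, e5, ch_natCast, ch_natCast, ch_natCast, if_pos h]
    · rw [hch0 l h, if_neg h]
      ring
  rw [conv1, conv2]
  exact core m n k i j hkm hkn him hjn hk
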